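/- Let P be a finite set of unit vectors in ℝⁿ, all with nonnegative last coordinate, such that any two distinct points of P have inner product at most 1/2. Let P_b = {p ∈ P : last coordinate of p > 1/2} and P_a = P \ P_b. Then the set P ∪ P_b', where P_b' is the set of reflections of points of P_b across the hyperplane xₙ = 0, is a set of unit vectors with pairwise inner products at most 1/2 and has cardinality |P_a| + 2|P_b|. Consequently, if every 60°-code on S^{n-1} has size at most k, then |P_a| + 2|P_b| ≤ k. -/

import Mathlib

open scoped RealInnerProductSpace
open scoped Classical

/-- Reflection of a point of `ℝ^{n+1}` across the hyperplane where the last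
coordinate vanishes. -/
def reflLast (n : ℕ) (p : EuclideanSpace ℝ (Fin (n + 1))) :
    EuclideanSpace ℝ (Fin (n + 1)) :=
  WithLp.toLp 2 (fun i => if i = Fin.last n then -(p i) else p i)

lemma inner_reflLast_right (n : ℕ) (p q : EuclideanSpace ℝ (Fin (n + 1))) :
    ⟪p, reflLast n q⟫ = ⟪p, q⟫ - 2 * p (Fin.last n) * q (Fin.last n) := by
  simp only [PiLp.inner_apply, RCLike.inner_apply, starRingEnd_apply, star_trivial, reflLast, PiLp.toLp_apply]
  have : ∀ i, (if i = Fin.last n then -(q i) else q i) * p i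
      = q i * p i - (if i = Fin.last n then 2 * p i * q i else 0) := by
    intro i; split <;> ring
  simp_rw [this, Finset.sum_sub_distrib, Finset.sum_ite_eq' Finset.univ (Fin.last n)]
  simp

lemma inner_reflLast_reflLast (n : ℕ) (p q : EuclideanSpace ℝ (Fin (n + 1))) :
    ⟪reflLast n p, reflLast n q⟫ = ⟪p, q⟫ := by
  simp only [PiLp.inner_apply, RCLike.inner_apply, starRingEnd_apply, star_trivial, reflLast, PiLp.toLp_apply]
  refine Finset.sum_congr rfl fun i _ => ?_
  split <;> ring

lemma reflLast_invol (n : ℕ) (p : EuclideanSpace ℝ (Fin (n + 1))) :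
    reflLast n (reflLast n p) = p := by
  ext i
  simp only [reflLast, PiLp.toLp_apply]
  split <;> simp

lemma norm_reflLast (n : ℕ) (p : EuclideanSpace ℝ (Fin (n + 1))) :
    ‖reflLast n p‖ = ‖p‖ := by
  rw [norm_eq_sqrt_real_inner, norm_eq_sqrt_real_inner p, inner_reflLast_reflLast]

theorem doubling_argument (n : ℕ) (k : ℕ)
    (P : Finset (EuclideanSpace ℝ (Fin (n + 1))))
    (hnorm : ∀ p ∈ P, ‖p‖ = 1)
    (hhemi : ∀ p ∈ P, 0 ≤ p (Fin.last n))
    (hcode : ∀ p ∈ P, ∀ q ∈ P, p ≠ q → ⟪p, q⟫ ≤ 1 / 2)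
    (Pb : Finset (EuclideanSpace ℝ (Fin (n + 1))))
    (hPb : Pb = P.filter (fun p => 1 / 2 < p (Fin.last n)))
    (Pa : Finset (EuclideanSpace ℝ (Fin (n + 1))))
    (hPa : Pa = P \ Pb)
    (hk : ∀ Q : Finset (EuclideanSpace ℝ (Fin (n + 1))),
      (∀ p ∈ Q, ‖p‖ = 1) → (∀ p ∈ Q, ∀ q ∈ Q, p ≠ q → ⟪p, q⟫ ≤ 1 / 2) →
      Q.card ≤ k) :
    (∀ p ∈ P ∪ Pb.image (reflLast n), ‖p‖ = 1) ∧
    (∀ p ∈ P ∪ Pb.image (reflLast n), ∀ q ∈ P ∪ Pb.image (reflLast n),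
      p ≠ q → ⟪p, q⟫ ≤ 1 / 2) ∧
    (P ∪ Pb.image (reflLast n)).card = Pa.card + 2 * Pb.card ∧
    Pa.card + 2 * Pb.card ≤ k := by
  have hPbP : Pb ⊆ P := by rw [hPb]; exact Finset.filter_subset _ _
  have hPbbig : ∀ p ∈ Pb, 1 / 2 < p (Fin.last n) := by
    intro p hp; rw [hPb] at hp; exact (Finset.mem_filter.mp hp).2
  -- norms
  have h1 : ∀ p ∈ P ∪ Pb.image (reflLast n), ‖p‖ = 1 := by
    intro p hp
    rcases Finset.mem_union.mp hp with h | h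
    · exact hnorm p h
    · obtain ⟨q, hq, rfl⟩ := Finset.mem_image.mp h
      rw [norm_reflLast]; exact hnorm q (hPbP hq)
  -- mixed inner product bound
  have hmix : ∀ p ∈ P, ∀ q ∈ Pb, ⟪p, reflLast n q⟫ ≤ 1 / 2 := by
    intro p hp q hq
    rw [inner_reflLast_right]
    by_cases hpq : p = q
    · subst hpq
      have hsq : ⟪p, p⟫ = 1 := by
        rw [real_inner_self_eq_norm_sq, hnorm p hp]; norm_num
      have hb := hPbbig p hq
      nlinarith
    · have h1 := hcode p hp q (hPbP hq) hpq
      have h2 := hhemi p hp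
      have h3 := hPbbig q hq
      nlinarith
  have h2 : ∀ p ∈ P ∪ Pb.image (reflLast n), ∀ q ∈ P ∪ Pb.image (reflLast n),
      p ≠ q → ⟪p, q⟫ ≤ 1 / 2 := by
    intro p hp q hq hne
    rcases Finset.mem_union.mp hp with hp | hp <;>
      rcases Finset.mem_union.mp hq with hq | hq
    · exact hcode p hp q hq hne
    · obtain ⟨q', hq', rfl⟩ := Finset.mem_image.mp hq
      exact hmix p hp q' hq'
    · obtain ⟨p', hp', rfl⟩ := Finset.mem_image.mp hp
      rw [real_inner_comm]
      exact hmix q hq p' hp'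
    · obtain ⟨p', hp', rfl⟩ := Finset.mem_image.mp hp
      obtain ⟨q', hq', rfl⟩ := Finset.mem_image.mp hq
      rw [inner_reflLast_reflLast]
      refine hcode p' (hPbP hp') q' (hPbP hq') fun h => hne (by rw [h])
  -- cardinality
  have hinj : Set.InjOn (reflLast n) Pb := fun a _ b _ h => by
    rw [← reflLast_invol n a, h, reflLast_invol]
  have hdisj : Disjoint P (Pb.image (reflLast n)) := by
    rw [Finset.disjoint_right]
    intro p hp hpP
    obtain ⟨q, hq, rfl⟩ := Finset.mem_image.mp hp
    have h1 := hhemi _ hpP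
    have h2 := hPbbig q hq
    have h3 : (reflLast n q) (Fin.last n) = -(q (Fin.last n)) := by simp [reflLast]
    rw [h3] at h1
    linarith
  have hcardP : P.card = Pa.card + Pb.card := by
    have := Finset.card_le_card hPbP
    rw [hPa, Finset.card_sdiff_of_subset hPbP]
    omega
  have hcard : (P ∪ Pb.image (reflLast n)).card = Pa.card + 2 * Pb.card := by
    rw [Finset.card_union_of_disjoint hdisj, Finset.card_image_of_injOn hinj, hcardP]
    ring
  refine ⟨h1, h2, hcard, ?_⟩
  rw [← hcard]
  exact hk _ h1 h2
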